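/- arXiv:1804.00728 — 2 statements merged into one kernel-verified Lean document; each statement's English description precedes it below -/
import Mathlib

section
/- Let G be a non-cyclic group of order n. Then the clique number of RP(G) is strictly less than the clique number of RP(ℤ_n), and likewise the chromatic number of RP(G) is strictly less than that of RP(ℤ_n). -/
open SimpleGraph

/-- The reduced power graph of a group. -/
def redPowGraph (G : Type*) [Group G] : SimpleGraph G where
  Adj u v := Subgroup.zpowers u < Subgroup.zpowers v ∨ Subgroup.zpowers v < Subgroup.zpowers u
  symm := ⟨fun u v h => h.symm⟩
  loopless := ⟨fun u h => by cases h <;> simp_all⟩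

/-- The proper reduced power graph: induced subgraph on the non-identity elements. -/
def properRedPowGraph (G : Type*) [Group G] : SimpleGraph {x : G // x ≠ 1} :=
  SimpleGraph.comap Subtype.val (redPowGraph G)

/-- Ω(n): number of prime factors counted with multiplicity. -/
def bigOmega (n : ℕ) : ℕ := n.primeFactorsList.length

open Subgroup

lemma bigOmega_lt_of_dvd {a b : ℕ} (hb : b ≠ 0) (hab : a ∣ b) (hne : a ≠ b) :
    bigOmega a < bigOmega b := by
  obtain ⟨c, rfl⟩ := hab
  have ha : a ≠ 0 := by rintro rfl; simp at hb
  have hc : c ≠ 0 := by rintro rfl; simp at hb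
  have hc1 : c ≠ 1 := by rintro rfl; simp at hne
  have h := (Nat.perm_primeFactorsList_mul ha hc).length_eq
  rw [List.length_append] at h
  have hcpos : c.primeFactorsList ≠ [] := by
    intro hnil
    rcases (Nat.primeFactorsList_eq_nil c).mp hnil with h' | h' <;> contradiction
  have := List.length_pos_iff.mpr hcpos
  unfold bigOmega; omega

lemma dvd_ne_of_zpowers_lt {G : Type*} [Group G] [Fintype G] {u v : G}
    (h : zpowers u < zpowers v) :
    orderOf u ∣ orderOf v ∧ orderOf u ≠ orderOf v := by
  constructor
  · have := Subgroup.card_dvd_of_le h.le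
    simp only [Nat.card_zpowers] at this
    exact this
  · intro he
    exact h.ne (Subgroup.eq_of_le_of_card_ge h.le
      (by simp [Nat.card_eq_fintype_card, Fintype.card_zpowers, he]))

lemma zpowers_le_of_orderOf_dvd {H : Type*} [Group H] [Fintype H] [IsCyclic H]
    {x y : H} (h : orderOf x ∣ orderOf y) : zpowers x ≤ zpowers y := by
  classical
  rw [Subgroup.zpowers_le]
  have hy : 0 < orderOf y := orderOf_pos y
  set S : Finset H := Finset.univ.filter (fun a => a ^ orderOf y = 1) with hS
  have hcard : S.card ≤ orderOf y := IsCyclic.card_pow_eq_one_le hy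
  have hsub : ((zpowers y : Subgroup H) : Set H).toFinset ⊆ S := by
    intro a ha
    rw [Set.mem_toFinset] at ha
    obtain ⟨k, rfl⟩ := ha
    simp only [hS, Finset.mem_filter, Finset.mem_univ, true_and]
    rw [← zpow_natCast, ← zpow_mul, mul_comm, zpow_mul, zpow_natCast,
      pow_orderOf_eq_one, one_zpow]
  have hc2 : ((zpowers y : Subgroup H) : Set H).toFinset.card = orderOf y := by
    rw [Set.toFinset_card]
    exact Fintype.card_zpowers
  have heq : ((zpowers y : Subgroup H) : Set H).toFinset = S :=
    Finset.eq_of_subset_of_card_le hsub (by omega)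
  have hxS : x ∈ S := by
    simp only [hS, Finset.mem_filter, Finset.mem_univ, true_and]
    exact orderOf_dvd_iff_pow_eq_one.mp h
  rw [← heq, Set.mem_toFinset] at hxS
  exact hxS

lemma exists_orderOf_eq' {H : Type*} [Group H] [Fintype H] [IsCyclic H] {d : ℕ} (hd0 : 0 < d)
    (hd : d ∣ Fintype.card H) : ∃ x : H, orderOf x = d := by
  classical
  have h := IsCyclic.card_orderOf_eq_totient (α := H) hd
  have hpos : 0 < ({a : H | orderOf a = d} : Finset H).card := by
    rw [h]; exact Nat.totient_pos.mpr hd0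
  obtain ⟨a, ha⟩ := Finset.card_pos.mp hpos
  exact ⟨a, by simpa using ha⟩

/-- For a non-cyclic group of order n, the clique number and chromatic number of
RP(G) are strictly smaller than those of RP(ℤ_n). -/
theorem stmt1 {G : Type*} [Group G] [Fintype G] (n : ℕ) (hn : Fintype.card G = n)
    (hnc : ¬ IsCyclic G) :
    (redPowGraph G).cliqueNum < (redPowGraph (Multiplicative (ZMod n))).cliqueNum ∧
    (redPowGraph G).chromaticNumber <
      (redPowGraph (Multiplicative (ZMod n))).chromaticNumber := by
  classical
  have hn0 : 0 < n := hn ▸ Fintype.card_pos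
  haveI : NeZero n := ⟨hn0.ne'⟩
  have hcardH : Fintype.card (Multiplicative (ZMod n)) = n := by
    rw [Fintype.card_multiplicative, ZMod.card]
  set k := bigOmega n with hk
  -- Upper bounds for G via an explicit coloring
  have hcol : ∀ x : G, bigOmega (orderOf x) < k := by
    intro x
    apply bigOmega_lt_of_dvd hn0.ne' (hn ▸ orderOf_dvd_card)
    intro he
    exact hnc (isCyclic_of_orderOf_eq_card x (by rw [he, Nat.card_eq_fintype_card, hn]))
  have C : (redPowGraph G).Coloring (Fin k) :=
    Coloring.mk (fun x => ⟨bigOmega (orderOf x), hcol x⟩) (by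
      intro u v hadj
      simp only [Ne, Fin.mk.injEq]
      rcases hadj with h | h
      · obtain ⟨hd, hne⟩ := dvd_ne_of_zpowers_lt h
        have := bigOmega_lt_of_dvd (orderOf_pos v).ne' hd hne
        omega
      · obtain ⟨hd, hne⟩ := dvd_ne_of_zpowers_lt h
        have := bigOmega_lt_of_dvd (orderOf_pos u).ne' hd hne
        omega)
  have hcolorable : (redPowGraph G).Colorable k := ⟨C⟩
  have hchiG : (redPowGraph G).chromaticNumber ≤ (k : ℕ∞) := hcolorable.chromaticNumber_le
  have homegaG : (redPowGraph G).cliqueNum ≤ k := by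
    obtain ⟨s, hs⟩ := (redPowGraph G).exists_isNClique_cliqueNum
    rw [← hs.card_eq]
    exact hs.isClique.card_le_of_colorable hcolorable
  -- A clique of size k+1 in the cyclic group
  set L := n.primeFactorsList with hL
  have hkL : k = L.length := rfl
  have hprime : ∀ p ∈ L, p.Prime := fun p hp => Nat.prime_of_mem_primeFactorsList hp
  set d : ℕ → ℕ := fun i => (L.take i).prod with hd
  have hd_pos : ∀ i, 0 < d i :=
    fun i => List.prod_pos (fun p hp => (hprime p (List.take_subset _ _ hp)).pos)
  have hsplit : ∀ i j : ℕ, i ≤ j → d j = d i * ((L.take j).drop i).prod := by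
    intro i j hij
    have h2 : (L.take j).take i = L.take i := by rw [List.take_take, min_eq_left hij]
    show (L.take j).prod = (L.take i).prod * ((L.take j).drop i).prod
    rw [← h2, ← List.prod_append, List.take_append_drop]
  have hd_dvd : ∀ i j : ℕ, i ≤ j → d i ∣ d j := fun i j hij => ⟨_, hsplit i j hij⟩
  have hd_dvd_n : ∀ i, d i ∣ n := by
    intro i
    refine ⟨(L.drop i).prod, ?_⟩
    rw [hd]
    show n = (L.take i).prod * (L.drop i).prod
    rw [← List.prod_append, List.take_append_drop, hL, Nat.prod_primeFactorsList hn0.ne']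
  have hd_ne : ∀ i j : ℕ, i < j → j ≤ k → d i ≠ d j := by
    intro i j hij hjk he
    have hs := hsplit i j hij.le
    have hc1 : ((L.take j).drop i).prod = 1 := by
      have : d i * ((L.take j).drop i).prod = d i * 1 := by
        rw [mul_one, ← hs, he]
      exact mul_left_cancel₀ (hd_pos i).ne' this
    have hlen : ((L.take j).drop i).length = j - i := by
      rw [List.length_drop, List.length_take]
      rw [hkL] at hjk
      omega
    have hnonnil : (L.take j).drop i ≠ [] := by
      intro hnil; rw [hnil] at hlen; simp at hlen; omega
    obtain ⟨p, hp⟩ := List.exists_mem_of_ne_nil _ hnonnil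
    have hpp : p.Prime := hprime p (List.take_subset _ _ (List.drop_subset _ _ hp))
    have : p ∣ 1 := hc1 ▸ List.dvd_prod hp
    exact hpp.one_lt.ne' (Nat.eq_one_of_dvd_one this)
  have hex : ∀ i : Fin (k + 1), ∃ x : Multiplicative (ZMod n), orderOf x = d i :=
    fun i => exists_orderOf_eq' (hd_pos i) (by rw [hcardH]; exact hd_dvd_n i)
  choose g hg using hex
  have hadj : ∀ i j : Fin (k + 1), i < j → zpowers (g i) < zpowers (g j) := by
    intro i j hij
    have hle : zpowers (g i) ≤ zpowers (g j) :=
      zpowers_le_of_orderOf_dvd (by rw [hg, hg]; exact hd_dvd i j hij.le)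
    refine lt_of_le_of_ne hle ?_
    intro he
    have horder : orderOf (g i) = orderOf (g j) := by
      rw [← Nat.card_zpowers, ← Nat.card_zpowers, he]
    rw [hg, hg] at horder
    exact hd_ne i j hij (Nat.lt_succ_iff.mp j.isLt) horder
  have hginj : Function.Injective g := by
    intro i j he
    by_contra hne
    rcases lt_or_gt_of_ne hne with h | h
    · exact (hadj i j h).ne (by rw [he])
    · exact (hadj j i h).ne (by rw [he])
  set s : Finset (Multiplicative (ZMod n)) := Finset.univ.image g with hsdef
  have hcard_s : s.card = k + 1 := by
    rw [hsdef, Finset.card_image_of_injective _ hginj, Finset.card_univ, Fintype.card_fin]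
  have hclique : (redPowGraph (Multiplicative (ZMod n))).IsClique s := by
    intro x hx y hy hxy
    simp only [hsdef, Finset.coe_image, Set.mem_image] at hx hy
    obtain ⟨i, -, rfl⟩ := hx
    obtain ⟨j, -, rfl⟩ := hy
    have hij : i ≠ j := fun h => hxy (by rw [h])
    rcases lt_or_gt_of_ne hij with h | h
    · exact Or.inl (hadj i j h)
    · exact Or.inr (hadj j i h)
  have homegaH : k + 1 ≤ (redPowGraph (Multiplicative (ZMod n))).cliqueNum :=
    hcard_s ▸ hclique.card_le_cliqueNum
  have hchiH : ((k + 1 : ℕ) : ℕ∞) ≤ (redPowGraph (Multiplicative (ZMod n))).chromaticNumber := by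
    have := hclique.card_le_chromaticNumber
    rwa [hcard_s] at this
  constructor
  · exact lt_of_le_of_lt homegaG (lt_of_lt_of_le (Nat.lt_succ_self k) homegaH)
  · refine lt_of_le_of_lt hchiG (lt_of_lt_of_le ?_ hchiH)
    exact_mod_cast Nat.lt_succ_self k
end

section
/- Let G be a finite group and k ≥ 3. Then RP*(G) is a complete k-partite graph if and only if G is isomorphic to the cyclic group ℤ_{p^k} for some prime p. -/
open SimpleGraph

/-- A graph is complete k-partite if its vertices can be partitioned into k nonempty
independent sets with every pair of vertices in different parts adjacent. -/
def IsCompleteKPartite {V : Type*} (Γ : SimpleGraph V) (k : ℕ) : Prop :=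
  ∃ P : V → Fin k, Function.Surjective P ∧ ∀ u v, Γ.Adj u v ↔ P u ≠ P v

open Subgroup

section Helpers

variable {G : Type*} [Group G] [Fintype G]

/-- Every element of a cyclic subgroup `zpowers u` has the same zpowers as `u ^ d`
where `d = gcd (orderOf u) n`. -/
lemma exists_gcd_rep {u x : G} (hx : x ∈ zpowers u) :
    ∃ d : ℕ, d ∣ orderOf u ∧ zpowers x = zpowers (u ^ d) ∧ orderOf x * d = orderOf u := by
  obtain ⟨n, hn⟩ := mem_powers_iff_mem_zpowers.mpr hx
  subst hn
  set N := orderOf u with hN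
  refine ⟨N.gcd n, Nat.gcd_dvd_left _ _, ?_, ?_⟩
  · apply le_antisymm
    · rw [zpowers_le]
      show u ^ n ∈ zpowers (u ^ N.gcd n)
      have : u ^ n = (u ^ (N.gcd n)) ^ (n / N.gcd n) := by
        rw [← pow_mul, Nat.mul_div_cancel' (Nat.gcd_dvd_right _ _)]
      rw [this]
      exact Subgroup.pow_mem _ (mem_zpowers _) _
    · rw [zpowers_le]
      have key : u ^ ((N.gcd n : ℤ)) ∈ zpowers (u ^ n) := by
        rw [Nat.gcd_eq_gcd_ab N n]
        rw [zpow_add, zpow_mul, zpow_mul]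
        have h1 : (u : G) ^ (N : ℤ) = 1 := by
          rw [zpow_natCast, pow_orderOf_eq_one]
        rw [h1, one_zpow, one_mul]
        rw [zpow_natCast]
        exact zpow_mem (mem_zpowers _) _
      show u ^ (N.gcd n) ∈ zpowers (u ^ n)
      rwa [zpow_natCast] at key
  · rw [orderOf_pow]
    exact Nat.div_mul_cancel (Nat.gcd_dvd_left _ _)

lemma zpowers_le_of_orderOf_dvd_s5 {u x y : G} (hx : x ∈ zpowers u) (hy : y ∈ zpowers u)
    (h : orderOf x ∣ orderOf y) : zpowers x ≤ zpowers y := by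
  obtain ⟨dx, hdxN, hzx, hox⟩ := exists_gcd_rep hx
  obtain ⟨dy, hdyN, hzy, hoy⟩ := exists_gcd_rep hy
  have hdyx : dy ∣ dx := by
    obtain ⟨c, hc⟩ := h
    have h1 : orderOf x * dx = orderOf x * (c * dy) := by
      rw [hox, ← hoy, hc]; ring
    have h2 : dx = c * dy := Nat.eq_of_mul_eq_mul_left (orderOf_pos x) h1
    exact ⟨c, by rw [h2, mul_comm]⟩
  rw [hzx, hzy, zpowers_le]
  obtain ⟨c, hc⟩ := hdyx
  rw [hc, pow_mul]
  exact Subgroup.pow_mem _ (mem_zpowers _) _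

lemma zpowers_le_iff {u x y : G} (hx : x ∈ zpowers u) (hy : y ∈ zpowers u) :
    zpowers x ≤ zpowers y ↔ orderOf x ∣ orderOf y :=
  ⟨fun h => orderOf_dvd_of_mem_zpowers (h (mem_zpowers x)),
   zpowers_le_of_orderOf_dvd_s5 hx hy⟩

lemma zpowers_eq_iff {u x y : G} (hx : x ∈ zpowers u) (hy : y ∈ zpowers u) :
    zpowers x = zpowers y ↔ orderOf x = orderOf y := by
  constructor
  · intro h
    rw [← Nat.card_zpowers, ← Nat.card_zpowers, h]
  · intro h
    exact le_antisymm (zpowers_le_of_orderOf_dvd_s5 hx hy h.dvd)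
      (zpowers_le_of_orderOf_dvd_s5 hy hx h.symm.dvd)

lemma zpowers_lt_iff {u x y : G} (hx : x ∈ zpowers u) (hy : y ∈ zpowers u) :
    zpowers x < zpowers y ↔ orderOf x ∣ orderOf y ∧ orderOf x ≠ orderOf y := by
  rw [lt_iff_le_and_ne, zpowers_le_iff hx hy, Ne, zpowers_eq_iff hx hy]

/-- A subgroup contained in a cyclic subgroup has a generator. -/
lemma exists_zpowers_eq {u : G} (H : Subgroup G) (hH : H ≤ zpowers u) :
    ∃ h : G, h ∈ H ∧ zpowers h = H := by
  classical
  set N := orderOf u with hN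
  have hNpos : 0 < N := orderOf_pos u
  obtain ⟨h, hhmem, hhmax⟩ := Finset.exists_max_image (Finset.univ.filter (· ∈ H)) orderOf
    ⟨1, by simp [Finset.mem_filter, one_mem]⟩
  simp only [Finset.mem_filter, Finset.mem_univ, true_and] at hhmem
  have hhmax' : ∀ x ∈ H, orderOf x ≤ orderOf h := fun x hx =>
    hhmax x (by simp [Finset.mem_filter, hx])
  refine ⟨h, hhmem, le_antisymm (zpowers_le.mpr hhmem) ?_⟩
  intro x hx
  obtain ⟨dx, hdxN, hzx, hox⟩ := exists_gcd_rep (hH hx)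
  obtain ⟨dh, hdhN, hzh, hoh⟩ := exists_gcd_rep (hH hhmem)
  set e := Nat.gcd dx dh with he
  have heN : e ∣ N := (Nat.gcd_dvd_left dx dh).trans hdxN
  have hdh_pos : 0 < dh := by
    rcases Nat.eq_zero_or_pos dh with h0 | h0
    · rw [h0, mul_zero] at hoh; omega
    · exact h0
  have hueH : u ^ e ∈ H := by
    have h1 : u ^ dx ∈ H := (hzx ▸ zpowers_le.mpr hx) (mem_zpowers _)
    have h2 : u ^ dh ∈ H := (hzh ▸ zpowers_le.mpr hhmem) (mem_zpowers _)
    have key : u ^ (e : ℤ) = (u ^ dx) ^ (Nat.gcdA dx dh) * (u ^ dh) ^ (Nat.gcdB dx dh) := by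
      have hrhs : (u ^ dx) ^ (Nat.gcdA dx dh) * (u ^ dh) ^ (Nat.gcdB dx dh)
          = u ^ ((dx : ℤ) * Nat.gcdA dx dh + (dh : ℤ) * Nat.gcdB dx dh) := by
        rw [zpow_add, zpow_mul, zpow_mul, zpow_natCast, zpow_natCast]
      rw [hrhs, ← Nat.gcd_eq_gcd_ab]
    have hm : u ^ (e : ℤ) ∈ H := key ▸ H.mul_mem (H.zpow_mem h1 _) (H.zpow_mem h2 _)
    rwa [zpow_natCast] at hm
  have horder_e : orderOf (u ^ e) * e = N := by
    rw [orderOf_pow, ← hN, Nat.gcd_eq_right heN]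
    exact Nat.div_mul_cancel heN
  -- dh ≤ e
  have hdh_le_e : dh ≤ e := by
    have h1 : orderOf (u ^ e) ≤ orderOf h := hhmax' _ hueH
    have h2 : orderOf h * dh ≤ orderOf h * e := by
      calc orderOf h * dh = N := hoh
        _ = orderOf (u ^ e) * e := horder_e.symm
        _ ≤ orderOf h * e := Nat.mul_le_mul_right e h1
    exact Nat.le_of_mul_le_mul_left h2 (by
      have : 0 < orderOf h := orderOf_pos h
      exact this)
  have he_eq : e = dh := le_antisymm (Nat.le_of_dvd hdh_pos (Nat.gcd_dvd_right dx dh)) hdh_le_e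
  -- orderOf x ∣ orderOf h
  have hdvd : orderOf x ∣ orderOf h := by
    have hdh_dx : dh ∣ dx := he_eq ▸ Nat.gcd_dvd_left dx dh
    obtain ⟨t, ht⟩ := hdh_dx
    refine ⟨t, ?_⟩
    have h1 : orderOf h * dh = orderOf x * t * dh := by
      rw [hoh, ← hox, ht]; ring
    exact Nat.eq_of_mul_eq_mul_right hdh_pos h1
  exact zpowers_le_of_orderOf_dvd_s5 (hH hx) (hH hhmem) hdvd (mem_zpowers x)

/-- Lemma E: if every element of `zpowers g` outside a proper subgroup `H` generates
`zpowers g`, then `orderOf g` is a prime power and `H` has index `p` in it. -/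
lemma lemE {H : Subgroup G} {g : G} (hlt : H < zpowers g)
    (hgen : ∀ x, x ∈ zpowers g → x ∉ H → zpowers x = zpowers g) :
    ∃ r m : ℕ, r.Prime ∧ 1 ≤ m ∧ orderOf g = r ^ m ∧ Nat.card H = r ^ (m - 1) := by
  set N := orderOf g with hN
  have hgH : g ∉ H := fun h => (lt_iff_le_and_ne.mp hlt).2 (le_antisymm hlt.le (zpowers_le.mpr h))
  have hg1 : g ≠ 1 := by
    rintro rfl
    exact hgH (H.one_mem)
  have hN1 : 1 < N := by
    have hNpos : 0 < N := orderOf_pos g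
    have hNne1 : N ≠ 1 := fun h => hg1 (orderOf_eq_one_iff.mp (hN ▸ h))
    omega
  have hcardH_ne : Nat.card H ≠ N := by
    intro hc
    have : H = zpowers g := Subgroup.eq_of_le_of_card_ge hlt.le (by rw [Nat.card_zpowers, ← hN, hc])
    exact hlt.ne this
  have hcardH_dvd : Nat.card H ∣ N := by
    have := Subgroup.card_dvd_of_le hlt.le
    rwa [Nat.card_zpowers, ← hN] at this
  have key : ∀ r : ℕ, r.Prime → r ∣ N → Nat.card H = N / r := by
    intro r hr hrN
    have hMH : zpowers (g ^ r) ≤ H := by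
      intro x hxm
      by_contra hxH
      have hxg : x ∈ zpowers g := (zpowers_le.mpr (Subgroup.pow_mem _ (mem_zpowers g) r)) hxm
      have := hgen x hxg hxH
      have hox : orderOf x = N := by rw [← Nat.card_zpowers, this, Nat.card_zpowers]
      have hdvd : orderOf x ∣ orderOf (g ^ r) := orderOf_dvd_of_mem_zpowers hxm
      have horder : orderOf (g ^ r) = N / r := by
        rw [orderOf_pow, ← hN, Nat.gcd_eq_right hrN]
      rw [hox, horder] at hdvd
      have h1 : N ≤ N / r := Nat.le_of_dvd (by
        have : 0 < N := by omega
        exact Nat.div_pos (Nat.le_of_dvd this hrN) (hr.pos)) hdvd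
      have h2 : N / r < N := Nat.div_lt_self (by omega) hr.one_lt
      omega
    have h1 : N / r ∣ Nat.card H := by
      have := Subgroup.card_dvd_of_le hMH
      rwa [Nat.card_zpowers, orderOf_pow, ← hN, Nat.gcd_eq_right hrN] at this
    -- N / r ∣ card H ∣ N, card H ≠ N ⇒ card H = N / r
    obtain ⟨s, hs⟩ := h1
    obtain ⟨w, hw⟩ := hcardH_dvd
    have hNr_pos : 0 < N / r := Nat.div_pos (Nat.le_of_dvd (by omega) hrN) hr.pos
    have hNrr : N / r * r = N := Nat.div_mul_cancel hrN
    have hsr : s ∣ r := by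
      have h3 : s * w = r := by
        have h2 : N / r * (s * w) = N / r * r := by rw [← mul_assoc, ← hs, ← hw, hNrr]
        exact Nat.eq_of_mul_eq_mul_left hNr_pos h2
      exact ⟨w, h3.symm⟩
    rcases (Nat.Prime.eq_one_or_self_of_dvd hr s hsr) with h | h
    · rw [hs, h, mul_one]
    · exfalso; apply hcardH_ne; rw [hs, h, hNrr]
  -- now N is a prime power
  have huniq : ∀ {d : ℕ}, d.Prime → d ∣ N → d = N.minFac := by
    intro d hd hdN
    have h1 := key d hd hdN
    have h2 := key N.minFac (Nat.minFac_prime (by omega)) (Nat.minFac_dvd N)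
    have hd' : d = N / Nat.card H := by
      rw [h1, Nat.div_div_self hdN (by omega)]
    have hm' : N.minFac = N / Nat.card H := by
      rw [h2, Nat.div_div_self (Nat.minFac_dvd N) (by omega)]
    rw [hd', hm']
  have hNpow := Nat.eq_prime_pow_of_unique_prime_dvd (by omega : N ≠ 0) huniq
  set m := N.primeFactorsList.length with hm
  have hminfac_prime : N.minFac.Prime := Nat.minFac_prime (by omega)
  have hm1 : 1 ≤ m := by
    rcases Nat.eq_zero_or_pos m with h0 | h0
    · rw [h0, pow_zero] at hNpow; omega
    · exact h0
  have hkey := key N.minFac hminfac_prime (Nat.minFac_dvd N)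
  obtain ⟨P, hPdef⟩ : ∃ P, N.minFac = P := ⟨_, rfl⟩
  rw [hPdef] at hNpow hminfac_prime hkey
  refine ⟨P, m, hminfac_prime, hm1, hNpow, ?_⟩
  have hms : m - 1 + 1 = m := by omega
  have hdiv : N / P = P ^ (m - 1) := by
    have h := Nat.pow_div (show 1 ≤ m by omega) hminfac_prime.pos
    rw [pow_one] at h
    rw [hNpow, h]
  rw [hkey, hdiv]


/-- Auxiliary commutation identity. -/
lemma aux_comm_pow {G : Type*} [Group G] {a y d : G} (hda : ∀ g : G, d * g = g * d)
    (hrel : a * y = d * (y * a)) : ∀ n : ℕ, a * y ^ n = d ^ n * (y ^ n * a) := by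
  intro n
  induction n with
  | zero => simp
  | succ n ih =>
    calc a * y ^ (n + 1) = (a * y ^ n) * y := by rw [pow_succ, mul_assoc]
      _ = (d ^ n * (y ^ n * a)) * y := by rw [ih]
      _ = d ^ n * (y ^ n * (a * y)) := by group
      _ = d ^ n * (y ^ n * (d * (y * a))) := by rw [hrel]
      _ = d ^ n * ((y ^ n * d) * (y * a)) := by group
      _ = d ^ n * ((d * y ^ n) * (y * a)) := by rw [← hda (y ^ n)]
      _ = d ^ (n + 1) * (y ^ (n + 1) * a) := by rw [pow_succ, pow_succ]; group

/-- The binomial-type formula for a product with central "commutator" `d`. -/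
lemma central_comm_pow {G : Type*} [Group G] {a y d : G} (hda : ∀ g : G, d * g = g * d)
    (hrel : a * y = d * (y * a)) : ∀ n : ℕ, d ^ n.choose 2 * (a * y) ^ n = a ^ n * y ^ n := by
  intro n
  induction n with
  | zero => simp
  | succ n ih =>
    have hchoose : (n + 1).choose 2 = n.choose 2 + n := by
      rw [show (2:ℕ) = 1 + 1 from rfl, Nat.choose_succ_succ' n 1, Nat.choose_one_right]
      omega
    have hdpow : ∀ (t : ℕ) (g : G), d ^ t * g = g * d ^ t := by
      intro t g
      exact ((show Commute d g from hda g).pow_left t).eq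
    calc d ^ (n + 1).choose 2 * (a * y) ^ (n + 1)
        = d ^ n * (d ^ n.choose 2 * (a * y) ^ n) * (a * y) := by
          rw [hchoose, pow_add, pow_succ]; group
      _ = d ^ n * (a ^ n * y ^ n) * (a * y) := by rw [ih]
      _ = (d ^ n * a ^ n) * (y ^ n * a) * y := by group
      _ = (a ^ n * d ^ n) * (y ^ n * a) * y := by rw [hdpow n (a ^ n)]
      _ = a ^ n * (d ^ n * (y ^ n * a)) * y := by group
      _ = a ^ n * (a * y ^ n) * y := by rw [← aux_comm_pow hda hrel n]
      _ = a ^ (n + 1) * y ^ (n + 1) := by rw [pow_succ, pow_succ]; group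

/-- Divisors of a product of two primes. -/
lemma dvd_prime_mul' {q1 q2 d : ℕ} (h1 : q1.Prime) (h2 : q2.Prime) (hd : d ∣ q1 * q2) :
    d = 1 ∨ d = q1 ∨ d = q2 ∨ d = q1 * q2 := by
  by_cases hq : q1 ∣ d
  · obtain ⟨t, rfl⟩ := hq
    have ht : t ∣ q2 := (mul_dvd_mul_iff_left h1.pos.ne').mp hd
    rcases (h2.eq_one_or_self_of_dvd t ht) with rfl | rfl
    · right; left; simp
    · right; right; right; rfl
  · have hcop : Nat.Coprime d q1 := ((h1.coprime_iff_not_dvd).mpr hq).symm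
    have : d ∣ q2 := hcop.dvd_of_dvd_mul_left hd
    rcases h2.eq_one_or_self_of_dvd d this with rfl | rfl
    · left; rfl
    · right; right; left; rfl

end Helpers

section Main

variable {G : Type*} [Group G] [Fintype G]

/-- If `G` is cyclic and `RP*(G)` is complete `k`-partite with `k ≥ 3`,
then `|G| = p^k` for some prime. -/
lemma cyclic_case {u : G} (hu : ∀ g : G, g ∈ zpowers u) {k : ℕ} (hk : 3 ≤ k)
    (P : {x : G // x ≠ 1} → Fin k) (Psurj : Function.Surjective P)
    (Padj : ∀ x y, (properRedPowGraph G).Adj x y ↔ P x ≠ P y) :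
    ∃ p : ℕ, p.Prime ∧ Nat.card G = p ^ k := by
  classical
  set N := orderOf u with hN
  have hNcard : N = Nat.card G := orderOf_eq_card_of_forall_mem_zpowers hu
  obtain ⟨x0, -⟩ := Psurj ⟨0, by omega⟩
  have hN2 : 2 ≤ N := by
    haveI : Nontrivial G := ⟨⟨(x0 : G), 1, x0.2⟩⟩
    have h2 : 1 < Nat.card G := Finite.one_lt_card_iff_nontrivial.mpr this
    omega
  have hN0 : N ≠ 0 := by omega
  -- the adjacency dictionary
  have hadj_iff : ∀ x y : {x : G // x ≠ 1}, P x ≠ P y ↔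
      ((orderOf (x : G) ∣ orderOf (y : G) ∨ orderOf (y : G) ∣ orderOf (x : G)) ∧
        orderOf (x : G) ≠ orderOf (y : G)) := by
    intro x y
    rw [← Padj x y]
    show (zpowers (x : G) < zpowers (y : G) ∨ zpowers (y : G) < zpowers (x : G)) ↔ _
    rw [zpowers_lt_iff (hu x) (hu y), zpowers_lt_iff (hu y) (hu x)]
    constructor
    · rintro (⟨h1, h2⟩ | ⟨h1, h2⟩)
      exacts [⟨Or.inl h1, h2⟩, ⟨Or.inr h1, fun hc => h2 hc.symm⟩]
    · rintro ⟨h1 | h1, h2⟩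
      exacts [Or.inl ⟨h1, h2⟩, Or.inr ⟨h1, fun hc => h2 hc.symm⟩]
  -- elements of each divisor order
  have hordd : ∀ d : ℕ, d ∣ N → orderOf (u ^ (N / d)) = d := by
    intro d hd
    rw [orderOf_pow, ← hN, Nat.gcd_eq_right (Nat.div_dvd_of_dvd hd), Nat.div_div_self hd hN0]
  have hvert : ∀ d : ℕ, d ∣ N → d ≠ 1 → ∃ x : {x : G // x ≠ 1}, orderOf (x : G) = d := by
    intro d hd hd1
    have hor := hordd d hd
    have hne : u ^ (N / d) ≠ 1 := by
      intro hc
      rw [hc, orderOf_one] at hor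
      exact hd1 hor.symm
    exact ⟨⟨u ^ (N / d), hne⟩, hor⟩
  -- key contradiction pattern
  have key : ∀ d e f : ℕ, d ∣ N → e ∣ N → f ∣ N → d ≠ 1 → e ≠ 1 → f ≠ 1 →
      ¬ d ∣ e → ¬ e ∣ d → ¬ e ∣ f → ¬ f ∣ e → d ∣ f → d ≠ f → False := by
    intro d e f hdN heN hfN hd1 he1 hf1 hde hed hef hfe hdf hdnef
    obtain ⟨x, hx⟩ := hvert d hdN hd1
    obtain ⟨y, hy⟩ := hvert e heN he1
    obtain ⟨z, hz⟩ := hvert f hfN hf1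
    have hPxy : P x = P y := by
      by_contra hne
      obtain ⟨h1, -⟩ := (hadj_iff x y).mp hne
      rw [hx, hy] at h1
      tauto
    have hPyz : P y = P z := by
      by_contra hne
      obtain ⟨h1, -⟩ := (hadj_iff y z).mp hne
      rw [hy, hz] at h1
      tauto
    have hPxz : P x ≠ P z := by
      rw [hadj_iff x z, hx, hz]
      exact ⟨Or.inl hdf, hdnef⟩
    rw [hPxy, hPyz] at hPxz
    exact hPxz rfl
  -- N has a unique prime divisor
  have huniq : ∀ q1 q2 : ℕ, q1.Prime → q2.Prime → q1 ∣ N → q2 ∣ N → q1 = q2 := by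
    intro q1 q2 hq1 hq2 hd1 hd2
    by_contra hne
    have hq1q2 : ¬ q1 ∣ q2 := fun h => hne ((Nat.prime_dvd_prime_iff_eq hq1 hq2).mp h)
    have hq2q1 : ¬ q2 ∣ q1 := fun h => hne (((Nat.prime_dvd_prime_iff_eq hq2 hq1).mp h).symm)
    set A := ordCompl[q2] N with hA
    have hAN : A ∣ N := Nat.ordCompl_dvd N q2
    have hq2A : ¬ q2 ∣ A := Nat.not_dvd_ordCompl hq2 hN0
    have hq1A : q1 ∣ A := by
      have hsplit : ordProj[q2] N * A = N := Nat.ordProj_mul_ordCompl_eq_self N q2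
      have hcop : Nat.Coprime q1 (ordProj[q2] N) := by
        apply Nat.Coprime.pow_right
        exact (hq1.coprime_iff_not_dvd).mpr hq1q2
      exact hcop.dvd_of_dvd_mul_left (by rw [hsplit]; exact hd1)
    have hA1 : A ≠ 1 := by
      intro hc
      rw [hc] at hq1A
      exact hq1.one_lt.ne' (Nat.dvd_one.mp hq1A)
    by_cases hAq1 : A = q1
    · -- N = q2 ^ v2 * q1
      have hv2 : 1 ≤ N.factorization q2 := hq2.factorization_pos_of_dvd hN0 hd2
      by_cases hv22 : 2 ≤ N.factorization q2
      · -- use q2, q1, q2^v2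
        set B := ordProj[q2] N with hB
        have hBN : B ∣ N := Nat.ordProj_dvd N q2
        have hq2B : q2 ∣ B := dvd_pow_self q2 (by omega)
        have hB1 : B ≠ 1 := fun hc => by
          rw [hc] at hq2B
          exact hq2.one_lt.ne' (Nat.dvd_one.mp hq2B)
        have hq1B : ¬ q1 ∣ B := by
          intro h
          exact hq1q2 ((Nat.prime_dvd_prime_iff_eq hq1 hq2).mpr
            ((Nat.prime_dvd_prime_iff_eq hq1 hq2).mp (hq1.dvd_of_dvd_pow h)))
        have hBq1 : ¬ B ∣ q1 := by
          intro h
          rcases (hq1.eq_one_or_self_of_dvd B h) with h' | h'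
          · exact hB1 h'
          · rw [← h'] at hq2q1
            exact hq2q1 hq2B
        have hq2neB : q2 ≠ B := by
          intro hc
          have h1 : q2 ^ 1 = q2 ^ N.factorization q2 := by rw [pow_one]; exact hc.trans hB
          have := Nat.pow_right_injective hq2.two_le h1
          omega
        exact key q2 q1 B hd2 hd1 hBN hq2.one_lt.ne' hq1.one_lt.ne' hB1
          hq2q1 hq1q2 hq1B hBq1 hq2B hq2neB
      · -- N = q1 * q2 : chain argument
        have hNval : N = q2 * q1 := by
          have hsplit : ordProj[q2] N * A = N := Nat.ordProj_mul_ordCompl_eq_self N q2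
          have hv21 : N.factorization q2 = 1 := by omega
          rw [← hsplit, hAq1, hv21, pow_one]
        -- three pairwise adjacent vertices
        obtain ⟨a, ha⟩ := Psurj ⟨0, by omega⟩
        obtain ⟨b, hb⟩ := Psurj ⟨1, by omega⟩
        obtain ⟨c, hc⟩ := Psurj ⟨2, by omega⟩
        have hab : P a ≠ P b := by rw [ha, hb]; intro h; exact absurd (congrArg Fin.val h) (by simp)
        have hbc : P b ≠ P c := by rw [hb, hc]; intro h; exact absurd (congrArg Fin.val h) (by simp)
        have hac : P a ≠ P c := by rw [ha, hc]; intro h; exact absurd (congrArg Fin.val h) (by simp)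
        obtain ⟨hab1, hab2⟩ := (hadj_iff a b).mp hab
        obtain ⟨hbc1, hbc2⟩ := (hadj_iff b c).mp hbc
        obtain ⟨hac1, hac2⟩ := (hadj_iff a c).mp hac
        have hdvdN : ∀ x : {x : G // x ≠ 1},
            orderOf (x : G) = 1 ∨ orderOf (x : G) = q2 ∨ orderOf (x : G) = q1 ∨
              orderOf (x : G) = q2 * q1 := by
          intro x
          apply dvd_prime_mul' hq2 hq1
          rw [← hNval, hNcard]
          exact orderOf_dvd_natCard (x : G)
        have hne1 : ∀ x : {x : G // x ≠ 1}, orderOf (x : G) ≠ 1 := by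
          intro x hc
          exact x.2 (orderOf_eq_one_iff.mp hc)
        have hcontra1 : ¬ (q1 ∣ q2 ∨ q2 ∣ q1) := by tauto
        have hcontra2 : ¬ (q2 ∣ q1 ∨ q1 ∣ q2) := by tauto
        rcases (hdvdN a).resolve_left (hne1 a) with h1 | h1 | h1 <;>
          rcases (hdvdN b).resolve_left (hne1 b) with h2 | h2 | h2 <;>
          rcases (hdvdN c).resolve_left (hne1 c) with h3 | h3 | h3 <;>
          rw [h1] at hab1 hab2 hac1 hac2 <;>
          rw [h2] at hab1 hab2 hbc1 hbc2 <;>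
          rw [h3] at hbc1 hbc2 hac1 hac2 <;>
          tauto
    · -- use q1, q2, A
      have hAq2 : ¬ A ∣ q2 := by
        intro h
        rcases hq2.eq_one_or_self_of_dvd A h with h' | h'
        · exact hA1 h'
        · rw [h'] at hq2A
          exact hq2A dvd_rfl
      exact key q1 q2 A hd1 hd2 hAN hq1.one_lt.ne' hq2.one_lt.ne' hA1
        hq1q2 hq2q1 hq2A hAq2 hq1A (fun h => hAq1 h.symm)
  -- N is a prime power
  have hminfac : N.minFac.Prime := Nat.minFac_prime (by omega)
  have huniq' : ∀ {d : ℕ}, d.Prime → d ∣ N → d = N.minFac :=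
    fun hd hdN => huniq _ _ hd hminfac hdN (Nat.minFac_dvd N)
  have hNpow := Nat.eq_prime_pow_of_unique_prime_dvd hN0 huniq'
  set a := N.primeFactorsList.length with ha
  set q := N.minFac with hq
  have ha1 : 1 ≤ a := by
    rcases Nat.eq_zero_or_pos a with h0 | h0
    · rw [h0, pow_zero] at hNpow; omega
    · exact h0
  -- the exponent function
  have hexp : ∀ x : {x : G // x ≠ 1}, orderOf (x : G) = q ^ ((orderOf (x : G)).factorization q)
      ∧ 1 ≤ (orderOf (x : G)).factorization q ∧ (orderOf (x : G)).factorization q ≤ a := by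
    intro x
    have hdvd : orderOf (x : G) ∣ q ^ a := by
      rw [← hNpow, hNcard]
      exact orderOf_dvd_natCard (x : G)
    obtain ⟨t, htk, ht⟩ := (Nat.dvd_prime_pow hminfac).mp hdvd
    have hfact : (orderOf (x : G)).factorization q = t := by
      rw [ht, hminfac.factorization_pow]
      simp
    have ht1 : 1 ≤ t := by
      rcases Nat.eq_zero_or_pos t with h0 | h0
      · rw [h0, pow_zero] at ht
        exact absurd (orderOf_eq_one_iff.mp ht) x.2
      · exact h0
    rw [hfact]
    exact ⟨ht, ht1, htk⟩
  -- the choice of representatives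
  choose rep hrep using Psurj
  set F : Fin k → Fin a := fun i =>
    ⟨(orderOf ((rep i : {x : G // x ≠ 1}) : G)).factorization q - 1, by
      obtain ⟨-, h1, h2⟩ := hexp (rep i); omega⟩ with hF
  have hFinj : Function.Injective F := by
    intro i j hij
    by_contra hne
    have hPadj : P (rep i) ≠ P (rep j) := by rw [hrep i, hrep j]; exact hne
    obtain ⟨-, hord⟩ := (hadj_iff _ _).mp hPadj
    obtain ⟨hi1, hi2, -⟩ := hexp (rep i)
    obtain ⟨hj1, hj2, -⟩ := hexp (rep j)
    apply hord
    rw [hi1, hj1]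
    have hval : (orderOf ((rep i : {x : G // x ≠ 1}) : G)).factorization q - 1 =
        (orderOf ((rep j : {x : G // x ≠ 1}) : G)).factorization q - 1 := congrArg Fin.val hij
    congr 1
    omega
  have hFsurj : Function.Surjective F := by
    intro b
    have hbdvd : q ^ ((b : ℕ) + 1) ∣ N := by
      rw [hNpow]
      exact pow_dvd_pow q (by omega)
    obtain ⟨y, hy⟩ := hvert (q ^ ((b : ℕ) + 1)) hbdvd
      (by
        have := Nat.one_lt_pow (n := (b : ℕ) + 1) (by omega) hminfac.one_lt
        omega)
    refine ⟨P y, ?_⟩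
    have hPeq : P (rep (P y)) = P y := hrep (P y)
    have hnadj : ¬ (P (rep (P y)) ≠ P y) := by rw [hPeq]; simp
    have hcomp : orderOf ((rep (P y) : {x : G // x ≠ 1}) : G) ∣ orderOf (y : G) ∨
        orderOf (y : G) ∣ orderOf ((rep (P y) : {x : G // x ≠ 1}) : G) := by
      obtain ⟨h1, -, -⟩ := hexp (rep (P y))
      obtain ⟨h2, -, -⟩ := hexp y
      rcases le_total ((orderOf ((rep (P y) : {x : G // x ≠ 1}) : G)).factorization q)
        ((orderOf (y : G)).factorization q) with h | h
      · left; rw [h1, h2]; exact pow_dvd_pow q h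
      · right; rw [h1, h2]; exact pow_dvd_pow q h
    have hordeq : orderOf ((rep (P y) : {x : G // x ≠ 1}) : G) = orderOf (y : G) := by
      by_contra hne
      exact hnadj ((hadj_iff _ _).mpr ⟨hcomp, hne⟩)
    apply Fin.ext
    show (orderOf ((rep (P y) : {x : G // x ≠ 1}) : G)).factorization q - 1 = (b : ℕ)
    rw [hordeq, hy, hminfac.factorization_pow]
    simp
  have hka : k = a := by
    have := Fintype.card_of_bijective ⟨hFinj, hFsurj⟩
    simpa using this
  exact ⟨q, hminfac, by rw [← hNcard, hNpow, hka]⟩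


/-- Forward direction: complete k-partite (k ≥ 3) implies cyclic of prime power order. -/
lemma forward_direction {k : ℕ} (hk : 3 ≤ k)
    (h : IsCompleteKPartite (properRedPowGraph G) k) :
    ∃ p : ℕ, p.Prime ∧ IsCyclic G ∧ Nat.card G = p ^ k := by
  classical
  obtain ⟨P, Psurj, Padj⟩ := h
  -- u of maximal order
  obtain ⟨u, -, humax0⟩ := Finset.exists_max_image (Finset.univ : Finset G) orderOf
    ⟨1, Finset.mem_univ 1⟩
  have humaxord : ∀ g : G, orderOf g ≤ orderOf u := fun g => humax0 g (Finset.mem_univ g)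
  have humax' : ∀ w : G, ¬ (zpowers u < zpowers w) := by
    intro w hlt
    exact hlt.ne (Subgroup.eq_of_le_of_card_ge hlt.le
      (by rw [Nat.card_zpowers, Nat.card_zpowers]; exact humaxord w))
  have hu1 : u ≠ 1 := by
    obtain ⟨x0, -⟩ := Psurj ⟨0, by omega⟩
    intro hu
    apply x0.2
    have h1 : orderOf (x0 : G) ≤ 1 := by
      have := humaxord (x0 : G)
      rwa [hu, orderOf_one] at this
    have h2 : 1 ≤ orderOf (x0 : G) := orderOf_pos _
    exact orderOf_eq_one_iff.mp (le_antisymm h1 h2)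
  have hcyc : ∀ g : G, g ∈ zpowers u := by
    by_contra hnc
    push_neg at hnc
    obtain ⟨v0, hv0⟩ := hnc
    have hv01 : v0 ≠ 1 := fun h => hv0 (h ▸ (zpowers u).one_mem)
    -- maximal v above v0
    obtain ⟨v, hvmem0, hvmax0⟩ := Finset.exists_max_image
      (Finset.univ.filter (fun x => v0 ∈ zpowers x)) orderOf
      ⟨v0, by simp [mem_zpowers]⟩
    simp only [Finset.mem_filter, Finset.mem_univ, true_and] at hvmem0
    have hvmax' : ∀ w : G, ¬ (zpowers v < zpowers w) := by
      intro w hlt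
      have hv0w : v0 ∈ zpowers w := hlt.le hvmem0
      have hle : orderOf w ≤ orderOf v := hvmax0 w (by simp [hv0w])
      exact hlt.ne (Subgroup.eq_of_le_of_card_ge hlt.le
        (by rw [Nat.card_zpowers, Nat.card_zpowers]; exact hle))
    have hvu : v ∉ zpowers u := fun hm => hv0 (zpowers_le.mpr hm hvmem0)
    have hv1 : v ≠ 1 := by
      rintro rfl
      rw [zpowers_one_eq_bot, Subgroup.mem_bot] at hvmem0
      exact hv01 hvmem0
    have huv : u ∉ zpowers v := by
      intro hm
      have hle : zpowers u ≤ zpowers v := zpowers_le.mpr hm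
      have heq : zpowers u = zpowers v := hle.lt_or_eq.resolve_left (humax' v)
      exact hvu (heq ▸ mem_zpowers v)
    set U : {x : G // x ≠ 1} := ⟨u, hu1⟩ with hU
    set V : {x : G // x ≠ 1} := ⟨v, hv1⟩ with hV
    have hAdjUV : (properRedPowGraph G).Adj U V ↔
        (zpowers u < zpowers v ∨ zpowers v < zpowers u) := Iff.rfl
    have hPUV : P U = P V := by
      by_contra hne
      rcases (Padj U V).mpr hne with hlt | hlt
      · exact humax' v hlt
      · exact hvmax' u hlt
    set H0 : Subgroup G := zpowers u ⊓ zpowers v with hH0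
    have hSmem : ∀ x : {x : G // x ≠ 1}, P x ≠ P U → (x : G) ∈ H0 := by
      intro x hne
      have h1 : zpowers (x : G) < zpowers u ∨ zpowers u < zpowers (x : G) :=
        (Padj x U).mpr hne
      have hxu : zpowers (x : G) < zpowers u := h1.resolve_right (humax' _)
      have h2 : zpowers (x : G) < zpowers v ∨ zpowers v < zpowers (x : G) :=
        (Padj x V).mpr (hPUV ▸ hne)
      have hxv : zpowers (x : G) < zpowers v := h2.resolve_right (hvmax' _)
      exact ⟨hxu.le (mem_zpowers _), hxv.le (mem_zpowers _)⟩
    have hH0u : H0 ≤ zpowers u := inf_le_left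
    have huH0 : u ∉ H0 := fun hm => huv hm.2
    have hvH0 : v ∉ H0 := fun hm => hvu hm.1
    have hH0lt : H0 < zpowers u := lt_of_le_of_ne hH0u
      (fun he => huH0 (by rw [he]; exact mem_zpowers u))
    -- two parts different from P U
    obtain ⟨i, j, hij, hiU, hjU⟩ : ∃ i j : Fin k, i ≠ j ∧ i ≠ P U ∧ j ≠ P U := by
      have hcard : 1 < (Finset.univ.erase (P U)).card := by
        rw [Finset.card_erase_of_mem (Finset.mem_univ _), Finset.card_univ, Fintype.card_fin]
        omega
      obtain ⟨i, hi, j, hj, hij⟩ := Finset.one_lt_card.mp hcard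
      exact ⟨i, j, hij, Finset.ne_of_mem_erase hi, Finset.ne_of_mem_erase hj⟩
    obtain ⟨w1, hw1⟩ := Psurj i
    obtain ⟨w2, hw2⟩ := Psurj j
    have hw1H : (w1 : G) ∈ H0 := hSmem w1 (by rw [hw1]; exact hiU)
    have hw2H : (w2 : G) ∈ H0 := hSmem w2 (by rw [hw2]; exact hjU)
    have hw1w2 : zpowers (w1 : G) < zpowers (w2 : G) ∨ zpowers (w2 : G) < zpowers (w1 : G) :=
      (Padj w1 w2).mpr (by rw [hw1, hw2]; exact hij)
    -- every non-H0 element of a cyclic subgroup at part P U generates it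
    have hgen : ∀ (g : G) (hg1 : g ≠ 1), P ⟨g, hg1⟩ = P U →
        ∀ x, x ∈ zpowers g → x ∉ H0 → zpowers x = zpowers g := by
      intro g hg1 hPg x hxg hxH
      have hx1 : x ≠ 1 := fun hx => hxH (hx ▸ H0.one_mem)
      by_contra hne
      have hlt : zpowers x < zpowers g := lt_of_le_of_ne (zpowers_le.mpr hxg) hne
      have hPx : P ⟨x, hx1⟩ ≠ P ⟨g, hg1⟩ := (Padj ⟨x, hx1⟩ ⟨g, hg1⟩).mp (Or.inl hlt)
      exact hxH (hSmem ⟨x, hx1⟩ (hPg ▸ hPx))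
    obtain ⟨p, m, hp, hm1, hordu, hcardH0⟩ := lemE hH0lt (hgen u hu1 rfl)
    -- m ≥ 3
    have hm3 : 3 ≤ m := by
      obtain ⟨x, y, hxH, hyH, hx1, hy1, hxy⟩ :
          ∃ x y : G, x ∈ H0 ∧ y ∈ H0 ∧ x ≠ 1 ∧ y ≠ 1 ∧ zpowers x < zpowers y := by
        rcases hw1w2 with h | h
        · exact ⟨w1, w2, hw1H, hw2H, w1.2, w2.2, h⟩
        · exact ⟨w2, w1, hw2H, hw1H, w2.2, w1.2, h⟩
      have hyd : orderOf y ∣ p ^ (m - 1) := by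
        have hcd := Subgroup.card_dvd_of_le (zpowers_le.mpr hyH)
        rwa [Nat.card_zpowers, hcardH0] at hcd
      obtain ⟨jy, hjy_le, hjy⟩ := (Nat.dvd_prime_pow hp).mp hyd
      have hxd : orderOf x ∣ orderOf y := orderOf_dvd_of_mem_zpowers (hxy.le (mem_zpowers x))
      have hxney : orderOf x ≠ orderOf y := by
        intro he
        exact hxy.ne (Subgroup.eq_of_le_of_card_ge hxy.le
          (by rw [Nat.card_zpowers, Nat.card_zpowers, he]))
      obtain ⟨jx, hjx_le, hjx⟩ := (Nat.dvd_prime_pow hp).mp (hjy ▸ hxd)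
      have hx_ne1 : orderOf x ≠ 1 := fun hc => hx1 (orderOf_eq_one_iff.mp hc)
      have hjx1 : 1 ≤ jx := by
        rcases Nat.eq_zero_or_pos jx with h0 | h0
        · rw [h0, pow_zero] at hjx; exact absurd hjx hx_ne1
        · exact h0
      have hjxy : jx ≠ jy := fun hc => hxney (by rw [hjx, hjy, hc])
      omega
    -- generic structure of elements outside H0
    have hstruct : ∀ g : G, g ≠ 1 → g ∉ H0 →
        H0 < zpowers g ∧ orderOf g = p ^ m ∧
          (∀ x, x ∈ zpowers g → x ∉ H0 → zpowers x = zpowers g) := by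
      intro g hg1 hgH
      have hPg : P ⟨g, hg1⟩ = P U := by
        by_contra hne
        exact hgH (hSmem ⟨g, hg1⟩ hne)
      obtain ⟨b, hbH, hbz⟩ := exists_zpowers_eq H0 hH0u
      have hb1 : b ≠ 1 := by
        intro hc
        rw [hc, zpowers_one_eq_bot] at hbz
        have hcb : Nat.card H0 = 1 := by rw [← hbz, Subgroup.card_bot]
        rw [hcardH0] at hcb
        have := Nat.one_lt_pow (n := m - 1) (by omega) hp.one_lt
        omega
      have hPb : P ⟨b, hb1⟩ ≠ P U := by
        have hblt : zpowers b < zpowers u := by rw [hbz]; exact hH0lt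
        exact (Padj ⟨b, hb1⟩ U).mp (Or.inl hblt)
      have hH0g : H0 < zpowers g := by
        have hadj := (Padj ⟨g, hg1⟩ ⟨b, hb1⟩).mpr (by rw [hPg]; exact fun hc => hPb hc.symm)
        rcases hadj with h' | h'
        · exact absurd (hbz ▸ h'.le (mem_zpowers g)) hgH
        · rw [← hbz]; exact h'
      have hgen_g := hgen g hg1 hPg
      obtain ⟨r, e, hr, he1, horde, hcarde⟩ := lemE hH0g hgen_g
      have hre : r ^ (e - 1) = p ^ (m - 1) := by rw [← hcarde, hcardH0]
      have hrp : r = p := by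
        have h1 : p ∣ r ^ (e - 1) := by
          rw [hre]; exact dvd_pow_self p (by omega : m - 1 ≠ 0)
        have h2 : p ∣ r := hp.dvd_of_dvd_pow h1
        exact ((Nat.prime_dvd_prime_iff_eq hp hr).mp h2).symm
      subst hrp
      have hem : e = m := by
        have he_eq : e - 1 = m - 1 := Nat.pow_right_injective hp.two_le hre
        -- e ≥ 1, m ≥ 3
        omega
      rw [hem] at horde
      exact ⟨hH0g, horde, hgen_g⟩
    -- G is a p-group
    have hPG : IsPGroup p G := by
      intro g
      refine ⟨m, ?_⟩
      by_cases hgH : g ∈ H0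
      · have hdvd : orderOf g ∣ p ^ (m - 1) := by
          have hcd := Subgroup.card_dvd_of_le (zpowers_le.mpr hgH)
          rwa [Nat.card_zpowers, hcardH0] at hcd
        exact orderOf_dvd_iff_pow_eq_one.mp (hdvd.trans (pow_dvd_pow p (by omega)))
      · by_cases hg1 : g = 1
        · rw [hg1, one_pow]
        · have := (hstruct g hg1 hgH).2.1
          exact orderOf_dvd_iff_pow_eq_one.mp (this ▸ dvd_refl _)
    -- H0 is central
    have hcent : ∀ c g : G, c ∈ H0 → Commute c g := by
      intro c g hcH
      by_cases hgH : g ∈ H0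
      · obtain ⟨a', ha'⟩ := mem_zpowers_iff.mp (hH0u hcH)
        obtain ⟨b', hb'⟩ := mem_zpowers_iff.mp (hH0u hgH)
        rw [← ha', ← hb']
        exact Commute.zpow_zpow_self u a' b'
      · by_cases hg1 : g = 1
        · rw [hg1]; exact Commute.one_right c
        · have hlt := (hstruct g hg1 hgH).1
          obtain ⟨a', ha'⟩ := mem_zpowers_iff.mp (hlt.le hcH)
          rw [← ha']
          exact Commute.zpow_self g a'
    haveI hH0normal : H0.Normal := by
      constructor
      intro n hn g
      have hco : g * n * g⁻¹ = n := by
        rw [← (hcent n g hn).eq]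
        group
      rw [hco]
      exact hn
    -- the quotient is a nontrivial p-group
    have hQp : IsPGroup p (G ⧸ H0) := hPG.to_quotient H0
    haveI : Nontrivial (G ⧸ H0) := by
      refine ⟨⟨(u : G ⧸ H0), 1, ?_⟩⟩
      rw [Ne, QuotientGroup.eq_one_iff]
      exact huH0
    haveI : Fact p.Prime := ⟨hp⟩
    have hcenter : Nontrivial (Subgroup.center (G ⧸ H0)) := hQp.center_nontrivial
    obtain ⟨zb, hzb1⟩ := exists_ne (1 : Subgroup.center (G ⧸ H0))
    obtain ⟨z, hz⟩ := QuotientGroup.mk_surjective (zb : G ⧸ H0)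
    have hzH0 : z ∉ H0 := by
      intro hcm
      apply hzb1
      apply Subtype.ext
      show (zb : G ⧸ H0) = 1
      rw [← hz, QuotientGroup.eq_one_iff]
      exact hcm
    have hz1 : z ≠ 1 := fun hcm => hzH0 (hcm ▸ H0.one_mem)
    have hzcomm : ∀ g : G, g * z * g⁻¹ * z⁻¹ ∈ H0 := by
      intro g
      have hcen : ∀ q : G ⧸ H0, q * (zb : G ⧸ H0) = (zb : G ⧸ H0) * q := fun q =>
        Subgroup.mem_center_iff.mp zb.2 q
      have hmk : ((g * z * g⁻¹ * z⁻¹ : G) : G ⧸ H0) = 1 := by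
        have hgz : ((g * z * g⁻¹ * z⁻¹ : G) : G ⧸ H0) =
            (g : G ⧸ H0) * (z : G ⧸ H0) * (g : G ⧸ H0)⁻¹ * (z : G ⧸ H0)⁻¹ := by
          simp
        rw [hgz, hz, hcen (g : G ⧸ H0)]
        group
      exact (QuotientGroup.eq_one_iff _).mp hmk
    -- an element outside zpowers z
    have hztop : zpowers z ≠ ⊤ := by
      intro hcm
      have h1 : zpowers u ≤ zpowers z := by rw [hcm]; exact le_top
      have h2 : zpowers u = zpowers z := h1.lt_or_eq.resolve_left (humax' z)
      apply hvu
      rw [h2, hcm]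
      exact Subgroup.mem_top v
    obtain ⟨a, haz⟩ : ∃ a : G, a ∉ zpowers z := by
      by_contra hcm
      push_neg at hcm
      exact hztop ((Subgroup.eq_top_iff' (zpowers z)).mpr hcm)
    obtain ⟨hH0z, hordz, hgenz⟩ := hstruct z hz1 hzH0
    have ha1 : a ≠ 1 := fun hcm => haz (hcm ▸ (zpowers z).one_mem)
    have haH0 : a ∉ H0 := fun hcm => haz (hH0z.le hcm)
    obtain ⟨hH0a, horda, hgena⟩ := hstruct a ha1 haH0
    -- z^p generates H0, a^p lies in H0
    have hordzp : orderOf (z ^ p) = p ^ (m - 1) := by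
      rw [orderOf_pow, hordz, Nat.gcd_eq_right (dvd_pow_self p (by omega : m ≠ 0))]
      have hpd := Nat.pow_div (show 1 ≤ m by omega) hp.pos
      rw [pow_one] at hpd
      exact hpd
    have hzp_mem : z ^ p ∈ H0 := by
      by_contra hcm
      have heq := hgenz (z ^ p) (Subgroup.pow_mem _ (mem_zpowers z) p) hcm
      have hces : orderOf (z ^ p) = orderOf z := by
        rw [← Nat.card_zpowers, heq, Nat.card_zpowers]
      rw [hordzp, hordz] at hces
      have := Nat.pow_right_injective hp.two_le hces
      omega
    have hzp_eq : zpowers (z ^ p) = H0 := by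
      apply Subgroup.eq_of_le_of_card_ge (zpowers_le.mpr hzp_mem)
      rw [Nat.card_zpowers, hordzp, hcardH0]
    have hap_mem : a ^ p ∈ H0 := by
      by_contra hcm
      have heq := hgena (a ^ p) (Subgroup.pow_mem _ (mem_zpowers a) p) hcm
      have hces : orderOf (a ^ p) = orderOf a := by
        rw [← Nat.card_zpowers, heq, Nat.card_zpowers]
      have hoap : orderOf (a ^ p) = p ^ (m - 1) := by
        rw [orderOf_pow, horda, Nat.gcd_eq_right (dvd_pow_self p (by omega : m ≠ 0))]
        have hpd := Nat.pow_div (show 1 ≤ m by omega) hp.pos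
        rw [pow_one] at hpd
        exact hpd
      rw [hoap, horda] at hces
      have := Nat.pow_right_injective hp.two_le hces
      omega
    obtain ⟨s, hs⟩ := mem_zpowers_iff.mp (hzp_eq ▸ hap_mem)
    -- the commutator c of a and z
    set c := a * z * a⁻¹ * z⁻¹ with hcdef
    have hcH0 : c ∈ H0 := hzcomm a
    have hccomm : ∀ g : G, Commute c g := fun g => hcent c g hcH0
    have hconj : a * z * a⁻¹ = c * z := by rw [hcdef]; group
    have hconj_pow : ∀ t : ℤ, a * z ^ t * a⁻¹ = c ^ t * z ^ t := by
      intro t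
      have h1 : a * z ^ t * a⁻¹ = (a * z * a⁻¹) ^ t := by
        have := map_zpow (MulAut.conj a) z t
        simp only [MulAut.conj_apply] at this
        exact this
      rw [h1, hconj]
      exact (hccomm z).mul_zpow t
    have hcp1 : c ^ (p : ℤ) = 1 := by
      have h1 := hconj_pow (p : ℤ)
      have h2 : a * z ^ (p : ℤ) * a⁻¹ = z ^ (p : ℤ) := by
        rw [zpow_natCast]
        rw [← (hcent (z ^ p) a hzp_mem).eq]
        group
      rw [h2] at h1
      have h3 : c ^ (p : ℤ) * z ^ (p : ℤ) = 1 * z ^ (p : ℤ) := by rw [one_mul, ← h1]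
      exact mul_right_cancel h3
    -- the element w = a * z^(-s)
    set y := z ^ (-s) with hydef
    set d := c ^ (-s) with hddef
    have hdH0 : d ∈ H0 := H0.zpow_mem hcH0 _
    have hdcomm : ∀ g : G, d * g = g * d := fun g => ((hccomm g).zpow_left (-s)).eq
    have hdp1 : d ^ p = 1 := by
      calc d ^ p = (c ^ (-s)) ^ (p : ℤ) := by rw [hddef, zpow_natCast]
        _ = (c ^ (p : ℤ)) ^ (-s) := by rw [← zpow_mul, ← zpow_mul, mul_comm]
        _ = 1 := by rw [hcp1, one_zpow]
    have hrel : a * y = d * (y * a) := by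
      have h1 := hconj_pow (-s)
      rw [← hydef, ← hddef] at h1
      have h2 : a * y = (d * y) * a := by rw [← h1]; group
      rw [h2, mul_assoc]
    set w := a * y with hwdef
    have hw1 : w ≠ 1 := by
      intro hcm
      apply haz
      have hmm : a = y⁻¹ := eq_inv_of_mul_eq_one_left hcm
      rw [hmm, hydef]
      exact (zpowers z).inv_mem (Subgroup.zpow_mem _ (mem_zpowers z) _)
    have hwH0 : w ∉ H0 := by
      intro hcm
      apply haz
      have hyz : y ∈ zpowers z := Subgroup.zpow_mem _ (mem_zpowers z) _
      have hmm : a = w * y⁻¹ := by rw [hwdef]; group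
      rw [hmm]
      exact Subgroup.mul_mem _ (hH0z.le hcm) ((zpowers z).inv_mem hyz)
    have hordw := (hstruct w hw1 hwH0).2.1
    -- compute w^(p*p)
    have hpow := central_comm_pow hdcomm hrel p
    have hay : a ^ p * y ^ p = 1 := by
      have hap : a ^ p = z ^ ((p : ℤ) * s) := by
        rw [← hs, ← zpow_natCast z p, ← zpow_mul]
      have hyp : y ^ p = z ^ (-s * (p : ℤ)) := by
        rw [hydef, ← zpow_natCast (z ^ (-s)) p, ← zpow_mul]
      rw [hap, hyp, ← zpow_add]
      have hexp0 : (p : ℤ) * s + -s * (p : ℤ) = 0 := by ring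
      rw [hexp0, zpow_zero]
    rw [← hwdef, hay] at hpow
    have hwp : w ^ p = (d ^ p.choose 2)⁻¹ := eq_inv_of_mul_eq_one_right hpow
    have hwpp : w ^ (p * p) = 1 := by
      rw [pow_mul, hwp]
      calc ((d ^ p.choose 2)⁻¹) ^ p = ((d ^ p.choose 2) ^ p)⁻¹ := by rw [inv_pow]
        _ = ((d ^ p) ^ p.choose 2)⁻¹ := by rw [← pow_mul, mul_comm, pow_mul]
        _ = 1 := by rw [hdp1, one_pow, inv_one]
    have hdvd : p ^ m ∣ p ^ 2 := by
      rw [pow_two, ← hordw]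
      exact orderOf_dvd_of_pow_eq_one hwpp
    have := (Nat.pow_dvd_pow_iff_le_right hp.one_lt).mp hdvd
    omega
  -- conclude
  haveI hcyclic : IsCyclic G := ⟨⟨u, hcyc⟩⟩
  obtain ⟨p, hp, hcard⟩ := cyclic_case hcyc hk P Psurj Padj
  exact ⟨p, hp, hcyclic, hcard⟩


/-- Backward direction: a cyclic group of order `p^k` has complete `k`-partite `RP*`. -/
lemma backward_core (hc : IsCyclic G) {p k : ℕ} (hp : p.Prime) (hk1 : 1 ≤ k)
    (hcard : Nat.card G = p ^ k) : IsCompleteKPartite (properRedPowGraph G) k := by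
  classical
  obtain ⟨u, hu⟩ := hc.exists_generator
  have hNord : orderOf u = p ^ k := by
    rw [orderOf_eq_card_of_forall_mem_zpowers hu, hcard]
  have hexp : ∀ x : G, x ≠ 1 → orderOf x = p ^ ((orderOf x).factorization p) ∧
      1 ≤ (orderOf x).factorization p ∧ (orderOf x).factorization p ≤ k := by
    intro x hx
    have hdvd : orderOf x ∣ p ^ k := by
      rw [← hcard]
      exact orderOf_dvd_natCard x
    obtain ⟨t, htk, ht⟩ := (Nat.dvd_prime_pow hp).mp hdvd
    have hfact : (orderOf x).factorization p = t := by
      rw [ht, hp.factorization_pow]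
      simp
    have ht1 : 1 ≤ t := by
      rcases Nat.eq_zero_or_pos t with h0 | h0
      · rw [h0, pow_zero] at ht
        exact absurd (orderOf_eq_one_iff.mp ht) hx
      · exact h0
    rw [hfact]
    exact ⟨ht, ht1, htk⟩
  refine ⟨fun x => ⟨(orderOf (x : G)).factorization p - 1, ?_⟩, ?_, ?_⟩
  · obtain ⟨-, h1, h2⟩ := hexp (x : G) x.2
    omega
  · -- surjectivity
    intro i
    have hdvd : p ^ ((i : ℕ) + 1) ∣ p ^ k := pow_dvd_pow p (by omega)
    have hppos : p ^ k ≠ 0 := pow_ne_zero k hp.pos.ne'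
    set y := u ^ (p ^ k / p ^ ((i : ℕ) + 1)) with hy
    have hordy : orderOf y = p ^ ((i : ℕ) + 1) := by
      rw [hy, orderOf_pow, hNord, Nat.gcd_eq_right (Nat.div_dvd_of_dvd hdvd),
        Nat.div_div_self hdvd hppos]
    have hy1 : y ≠ 1 := by
      intro hcm
      rw [hcm, orderOf_one] at hordy
      have := Nat.one_lt_pow (n := (i : ℕ) + 1) (by omega) hp.one_lt
      omega
    refine ⟨⟨y, hy1⟩, ?_⟩
    apply Fin.ext
    show (orderOf y).factorization p - 1 = (i : ℕ)
    rw [hordy, hp.factorization_pow]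
    simp
  · -- adjacency
    intro x y
    obtain ⟨hx1, hx2, hx3⟩ := hexp (x : G) x.2
    obtain ⟨hy1, hy2, hy3⟩ := hexp (y : G) y.2
    show (zpowers (x : G) < zpowers (y : G) ∨ zpowers (y : G) < zpowers (x : G)) ↔ _
    rw [zpowers_lt_iff (hu x) (hu y), zpowers_lt_iff (hu y) (hu x)]
    constructor
    · rintro (⟨-, hne⟩ | ⟨-, hne⟩) <;>
      · intro hPeq
        have hval : (orderOf (x : G)).factorization p - 1 =
            (orderOf (y : G)).factorization p - 1 := congrArg Fin.val hPeq
        have : (orderOf (x : G)).factorization p = (orderOf (y : G)).factorization p := by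
          omega
        have horder : orderOf (x : G) = orderOf (y : G) := by
          rw [hx1, hy1, this]
        first
          | exact hne horder
          | exact hne horder.symm
    · intro hne
      have htne : (orderOf (x : G)).factorization p ≠ (orderOf (y : G)).factorization p := by
        intro hcm
        apply hne
        apply Fin.ext
        show (orderOf (x : G)).factorization p - 1 = (orderOf (y : G)).factorization p - 1
        rw [hcm]
      have hone : orderOf (x : G) ≠ orderOf (y : G) := fun hcm => htne (by rw [hcm])
      rcases le_total ((orderOf (x : G)).factorization p)
          ((orderOf (y : G)).factorization p) with hle | hle
      · left
        exact ⟨by rw [hx1, hy1]; exact pow_dvd_pow p hle, hone⟩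
      · right
        exact ⟨by rw [hx1, hy1]; exact pow_dvd_pow p hle, fun hcm => hone hcm.symm⟩

end Main

/-- For k ≥ 3, RP*(G) is complete k-partite iff G ≅ ℤ_{p^k} for some prime p. -/
theorem stmt5 {G : Type*} [Group G] [Fintype G] (k : ℕ) (hk : 3 ≤ k) :
    IsCompleteKPartite (properRedPowGraph G) k ↔
      ∃ p : ℕ, p.Prime ∧ Nonempty (G ≃* Multiplicative (ZMod (p ^ k))) := by
  constructor
  · intro h
    obtain ⟨p, hp, hcyclic, hcard⟩ := forward_direction hk h
    exact ⟨p, hp, ⟨hcard ▸ (zmodCyclicMulEquiv hcyclic).symm⟩⟩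
  · rintro ⟨p, hp, ⟨e⟩⟩
    have hcyc : IsCyclic G := isCyclic_of_surjective e.symm.toMonoidHom e.symm.surjective
    have hcard : Nat.card G = p ^ k := by
      rw [Nat.card_congr e.toEquiv]
      exact Nat.card_zmod (p ^ k)
    exact backward_core hcyc hp (by omega) hcard
end
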